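/- arXiv:1608.03009 — 2 statements merged into one kernel-verified Lean document; each statement's English description precedes it below -/
import Mathlib

section
/- Let H be a normal subgroup of G, let π : X → X/H be the quotient map for the restricted H-action, and consider the induced action of G/H on X/H. Then π(W_G(X)) ⊆ W_{G/H}(X/H). -/
open Pointwise

def IsWandering (G : Type*) {X : Type*} [Group G] [MulAction G X] [TopologicalSpace X]
    (U : Set X) : Prop :=
  IsOpen U ∧ ∀ g : G, g ≠ 1 → (g • U) ∩ U = ∅

def wanderingDomain (G : Type*) (X : Type*) [Group G] [MulAction G X] [TopologicalSpace X] :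
    Set X :=
  ⋃₀ {U : Set X | IsWandering G U}

/-- The orbit space `X/H` of the restricted action of a subgroup `H ≤ G`. -/
abbrev OrbitQuot {G : Type*} [Group G] (H : Subgroup G) (X : Type*) [MulAction G X] :=
  Quotient (MulAction.orbitRel H X)

theorem image_wandering_subset_quotient_wandering
    {G X : Type*} [Group G] [TopologicalSpace X] [MulAction G X]
    (hc : ∀ g : G, Continuous fun x : X => g • x)
    (H : Subgroup G) [H.Normal]
    [MulAction (G ⧸ H) (OrbitQuot H X)]
    (hcompat : ∀ (g : G) (x : X),
      ((g : G ⧸ H) • (Quotient.mk (MulAction.orbitRel H X) x) : OrbitQuot H X) =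
        Quotient.mk (MulAction.orbitRel H X) (g • x))
    (hc' : ∀ q : G ⧸ H, Continuous fun y : OrbitQuot H X => q • y) :
    (fun x : X => Quotient.mk (MulAction.orbitRel H X) x) '' wanderingDomain G X ⊆
      wanderingDomain (G ⧸ H) (OrbitQuot H X) := by
  rintro y ⟨x, ⟨U, ⟨hUopen, hUw⟩, hxU⟩, rfl⟩
  refine ⟨Quotient.mk (MulAction.orbitRel H X) '' U, ⟨?_, ?_⟩, ⟨x, hxU, rfl⟩⟩
  · -- openness of the image
    have hopen : ∀ g : G, IsOpen (g • U) := by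
      intro g
      have : g • U = (fun x : X => g⁻¹ • x) ⁻¹' U := by
        ext z
        simp [Set.mem_smul_set_iff_inv_smul_mem]
      rw [this]
      exact hUopen.preimage (hc g⁻¹)
    have hpre : (Quotient.mk (MulAction.orbitRel H X)) ⁻¹'
        (Quotient.mk (MulAction.orbitRel H X) '' U) = ⋃ h : H, (h : G) • U := by
      ext z
      simp only [Set.mem_preimage, Set.mem_image, Set.mem_iUnion]
      constructor
      · rintro ⟨u, huU, hq⟩
        obtain ⟨h, hh⟩ := Quotient.exact hq
        exact ⟨h⁻¹, by
          rw [Set.mem_smul_set_iff_inv_smul_mem]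
          simpa [← hh, Subgroup.smul_def] using huU⟩
      · rintro ⟨h, hz⟩
        rw [Set.mem_smul_set_iff_inv_smul_mem] at hz
        refine ⟨(h : G)⁻¹ • z, hz, Quotient.sound ⟨h⁻¹, ?_⟩⟩
        simp [Subgroup.smul_def]
    rw [isOpen_coinduced (f := Quotient.mk (MulAction.orbitRel H X))] at *
    show IsOpen ((Quotient.mk (MulAction.orbitRel H X)) ⁻¹' _)
    rw [hpre]
    exact isOpen_iUnion fun h => hopen h
  · -- wandering
    intro q hq
    obtain ⟨g, rfl⟩ := QuotientGroup.mk_surjective q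
    ext y
    simp only [Set.mem_inter_iff, Set.mem_empty_iff_false, iff_false, not_and]
    rintro ⟨y', ⟨u, huU, rfl⟩, rfl⟩ ⟨u', hu'U, hmk⟩
    have hmk' : (Quotient.mk (MulAction.orbitRel H X) u' : OrbitQuot H X) =
        Quotient.mk (MulAction.orbitRel H X) (g • u) := hmk.trans (hcompat g u)
    obtain ⟨h, hh⟩ := Quotient.exact hmk'
    -- hh : h • (g • u) = u'
    have hne : (h : G) * g ≠ 1 := by
      intro hcon
      apply hq
      have : g ∈ H := by
        have hg : g = (h : G)⁻¹ := eq_inv_of_mul_eq_one_right hcon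
        rw [hg]; exact inv_mem h.2
      exact (QuotientGroup.eq_one_iff g).2 this
    have : u' ∈ (((h : G) * g) • U) ∩ U :=
      ⟨⟨u, huU, by rw [← hh]; simp [mul_smul, Subgroup.smul_def]⟩, hu'U⟩
    rw [hUw ((h : G) * g) hne] at this
    exact this
end

section
/- With the notation of the quotient setting, if W_H(X) = X (i.e., every point of X has an H-wandering neighborhood), then π(W_G(X)) = W_{G/H}(X/H). -/
open Pointwise

theorem image_wandering_eq_quotient_wandering
    {G X : Type*} [Group G] [TopologicalSpace X] [MulAction G X]
    (hc : ∀ g : G, Continuous fun x : X => g • x)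
    (H : Subgroup G) [H.Normal]
    [MulAction (G ⧸ H) (OrbitQuot H X)]
    (hcompat : ∀ (g : G) (x : X),
      ((g : G ⧸ H) • (Quotient.mk (MulAction.orbitRel H X) x) : OrbitQuot H X) =
        Quotient.mk (MulAction.orbitRel H X) (g • x))
    (hc' : ∀ q : G ⧸ H, Continuous fun y : OrbitQuot H X => q • y)
    (hH : wanderingDomain H X = Set.univ) :
    (fun x : X => Quotient.mk (MulAction.orbitRel H X) x) '' wanderingDomain G X =
      wanderingDomain (G ⧸ H) (OrbitQuot H X) := by
  classical
  set π : X → OrbitQuot H X := fun x => Quotient.mk (MulAction.orbitRel H X) x with hπ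
  have hπcont : Continuous π := continuous_quot_mk
  have hπeq : ∀ (h : H) (x : X), π ((h : G) • x) = π x := by
    intro h x
    exact Quotient.sound ⟨h, rfl⟩
  apply Set.Subset.antisymm
  · rintro y ⟨x, hx, rfl⟩
    obtain ⟨U, ⟨hUo, hUw⟩, hxU⟩ := hx
    refine ⟨π '' U, ⟨?_, ?_⟩, ⟨x, hxU, rfl⟩⟩
    · have hpre : π ⁻¹' (π '' U) = ⋃ h : H, (fun x : X => (h : G) • x) ⁻¹' U := by
        ext z
        simp only [Set.mem_preimage, Set.mem_image, Set.mem_iUnion]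
        constructor
        · rintro ⟨u, hu, hq⟩
          obtain ⟨h, hh⟩ := Quotient.exact hq
          exact ⟨h, by rw [show ((h : G) • z) = u from hh]; exact hu⟩
        · rintro ⟨h, hz⟩
          exact ⟨(h : G) • z, hz, hπeq h z⟩
      have : IsOpen (π ⁻¹' (π '' U)) := by
        rw [hpre]
        exact isOpen_iUnion fun h => hUo.preimage (hc h)
      rwa [← isOpen_coinduced] at this
    · intro q hq
      rw [Set.eq_empty_iff_forall_notMem]
      rintro y ⟨hy1, hy2⟩
      obtain ⟨w, hw, hqw⟩ := hy1
      obtain ⟨u, hu, rfl⟩ := hw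
      obtain ⟨z, hz, hzy⟩ := hy2
      obtain ⟨g, rfl⟩ := QuotientGroup.mk_surjective q
      have hqw2 : ((g : G ⧸ H) • π u : OrbitQuot H X) = π z := by
        exact hqw.trans hzy.symm
      rw [hcompat g u] at hqw2
      obtain ⟨h, hh⟩ := Quotient.exact hqw2.symm
      have hne : (h : G) * g ≠ 1 := by
        intro hcon
        apply hq
        have hg1 : ((h : G))⁻¹ = g := mul_eq_one_iff_inv_eq.mp hcon
        have : g ∈ H := hg1 ▸ H.inv_mem h.2
        simpa [QuotientGroup.eq_one_iff] using this
      have := hUw ((h : G) * g) hne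
      rw [Set.eq_empty_iff_forall_notMem] at this
      apply this (((h : G) * g) • u)
      refine ⟨⟨u, hu, rfl⟩, ?_⟩
      have : (h : G) • (g • u) = z := hh
      rw [mul_smul, this]
      exact hz
  · rintro y hy
    obtain ⟨V, ⟨hVo, hVw⟩, hyV⟩ := hy
    obtain ⟨x, rfl⟩ := Quotient.exists_rep y
    have hx : x ∈ wanderingDomain H X := hH ▸ Set.mem_univ x
    obtain ⟨U', ⟨hU'o, hU'w⟩, hxU'⟩ := hx
    refine ⟨x, ⟨π ⁻¹' V ∩ U', ⟨(hVo.preimage hπcont).inter hU'o, ?_⟩, ⟨hyV, hxU'⟩⟩, rfl⟩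
    intro g hg
    rw [Set.eq_empty_iff_forall_notMem]
    rintro z ⟨hz1, hz2⟩
    obtain ⟨u, ⟨huV, huU'⟩, rfl⟩ := hz1
    obtain ⟨hzV, hzU'⟩ := hz2
    by_cases hgH : g ∈ H
    · have hne : (⟨g, hgH⟩ : H) ≠ 1 := by
        simpa [Subtype.ext_iff] using hg
      have := hU'w ⟨g, hgH⟩ hne
      rw [Set.eq_empty_iff_forall_notMem] at this
      exact this (g • u) ⟨⟨u, huU', rfl⟩, hzU'⟩
    · have hqne : (g : G ⧸ H) ≠ 1 := by
        simpa [QuotientGroup.eq_one_iff] using hgH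
      have := hVw (g : G ⧸ H) hqne
      rw [Set.eq_empty_iff_forall_notMem] at this
      apply this (π (g • u))
      refine ⟨⟨π u, huV, (hcompat g u)⟩, hzV⟩
end
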